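/- Fix ζ ∈ ℝ and δ ∈ (0, 1/8). Then there exist constants C > 0 and b₀ ∈ (0,1) such that for all b ∈ (0, b₀) and all t ∈ ℂ with Im t ∈ (−1/2 + δ, −2δ): |E(b², t)| ≤ C·b². -/

import Mathlib

open MeasureTheory

noncomputable section

/-- The dilogarithm `Li₂(z) = -∫₀¹ Log(1 - t z) dt / t` (principal branch of `Log`). -/
def Li2 (z : ℂ) : ℂ := -∫ t in (0:ℝ)..1, Complex.log (1 - (t:ℂ) * z) / (t:ℂ)

/-- Negative-index polylogarithms: `LiNeg m = Li_{-m}`, with `Li₀(w) = w/(1-w)` and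
`Li_{-m}(w) = w ⬝ d/dw Li_{-m+1}(w)`. -/
def LiNeg : ℕ → ℂ → ℂ
  | 0 => fun w => w / (1 - w)
  | (m+1) => fun w => w * deriv (LiNeg m) w

/-- `LiIdx n = Li_{2-2n}`: the dilogarithm for `n = 0`, and `Li_{-(2n-2)}` for `n ≥ 1`. -/
def LiIdx (n : ℕ) : ℂ → ℂ := if n = 0 then Li2 else LiNeg (2*n - 2)

/-- `L_b(z) = i ∫₀^∞ ( sin(2yz)/(2 sinh(y/b) sinh(by)) - z/y ) dy/y`. -/
def Lb (b : ℝ) (z : ℂ) : ℂ :=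
  Complex.I * ∫ y in Set.Ioi (0:ℝ),
    (Complex.sin (2 * (y:ℂ) * z) / (2 * (Real.sinh (y / b) : ℂ) * (Real.sinh (b * y) : ℂ))
      - z / (y:ℂ)) / (y:ℂ)

/-- Ruijsenaars' hyperbolic gamma function `s_b(z) = exp(L_b(z))`. -/
def sb (b : ℝ) (z : ℂ) : ℂ := Complex.exp (Lb b z)

/-- `Q = b + b⁻¹` as a complex number. -/
def Qb (b : ℝ) : ℂ := (b:ℂ) + (b:ℂ)⁻¹

/-- The function `𝓜(b, ζ', ω')`, the contour being the horizontal line `Im = -Q/4`. -/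
def Mfun (b : ℝ) (ζ : ℝ) (ω : ℂ) : ℂ :=
  sb b ζ * ∫ x : ℝ,
    Complex.exp (Complex.I * (Real.pi:ℂ) * ((x:ℂ) - Complex.I * Qb b / 4)
        * ((ζ:ℂ) - Complex.I * Qb b / 2 + 2 * ω)) *
      sb b ((x:ℂ) - Complex.I * Qb b / 4 - (ζ:ℂ))
        / sb b ((x:ℂ) - Complex.I * Qb b / 4 + Complex.I * Qb b / 2)

/-- The exponent `f_𝓜(ζ, ω)`. -/
def fM (ζ : ℝ) (ω : ℂ) : ℂ :=
  -(Li2 (-Complex.exp (2 * (Real.pi:ℂ) * (ζ:ℂ)))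
    + Li2 (-(Complex.exp (-((Real.pi:ℂ) * (ζ:ℂ))) * Complex.cosh ((Real.pi:ℂ) * ω)
        / Complex.sinh ((Real.pi:ℂ) * ((ζ:ℂ) + ω))))
    - Li2 (Complex.exp ((Real.pi:ℂ) * (ζ:ℂ)) * Complex.cosh ((Real.pi:ℂ) * ω)
        / Complex.sinh ((Real.pi:ℂ) * ((ζ:ℂ) + ω))))
    / (2 * (Real.pi:ℂ) * Complex.I)
  + Complex.I * (Real.pi:ℂ) * (ζ:ℂ)^2
  + Complex.I * (ω - Complex.I / 2) *
      Complex.log (Complex.exp ((Real.pi:ℂ) * (ζ:ℂ)) * Complex.cosh ((Real.pi:ℂ) * ω)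
        / Complex.sinh ((Real.pi:ℂ) * ((ζ:ℂ) + ω)))
  + Complex.I * (Real.pi:ℂ) / 6

/-- The function `𝓠(b, σ', μ')`, the contour being the horizontal line `Im = -3Q/8`. -/
def Qfun (b : ℝ) (σ μ : ℝ) : ℂ :=
  Complex.exp (Complex.I * (Real.pi:ℂ) *
      (1/6 + 7 * (Qb b)^2 / 24 - (μ:ℂ)^2/2 + Complex.I * (μ:ℂ) * Qb b - (σ:ℂ)^2)) * sb b μ *
  ∫ x : ℝ,
    Complex.exp (-(Complex.I * (Real.pi:ℂ) * ((x:ℂ) - 3 * Complex.I * Qb b / 8)^2)) *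
    Complex.exp (2 * Complex.I * (Real.pi:ℂ) * ((x:ℂ) - 3 * Complex.I * Qb b / 8)
      * ((μ:ℂ) - Complex.I * Qb b / 2)) *
    sb b ((x:ℂ) - 3 * Complex.I * Qb b / 8 + (σ:ℂ)) *
    sb b ((x:ℂ) - 3 * Complex.I * Qb b / 8 - (σ:ℂ))

/-- The exponent `f_𝓠(σ, μ)`. -/
def fQ (σ μ : ℝ) : ℂ :=
  -(Li2 (-Complex.exp (2 * (Real.pi:ℂ) * (μ:ℂ)))) / (2 * (Real.pi:ℂ) * Complex.I)
  - Li2 (Complex.exp (-(2 * (Real.pi:ℂ) * (σ:ℂ))) *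
      ((Real.cosh (2*Real.pi*σ) : ℂ) + Complex.I *
        (Real.sqrt (Real.exp (2*Real.pi*μ) - Real.sinh (2*Real.pi*σ)^2) : ℂ)))
    / (2 * (Real.pi:ℂ) * Complex.I)
  - Li2 (Complex.exp (2 * (Real.pi:ℂ) * (σ:ℂ)) *
      ((Real.cosh (2*Real.pi*σ) : ℂ) + Complex.I *
        (Real.sqrt (Real.exp (2*Real.pi*μ) - Real.sinh (2*Real.pi*σ)^2) : ℂ)))
    / (2 * (Real.pi:ℂ) * Complex.I)
  + (1/2 + Complex.I * (μ:ℂ)) *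
      Complex.log (-(Real.cosh (2*Real.pi*σ) : ℂ) - Complex.I *
        (Real.sqrt (Real.exp (2*Real.pi*μ) - Real.sinh (2*Real.pi*σ)^2) : ℂ))
  - (Real.pi:ℂ) * (μ:ℂ) + 5 * (Real.pi:ℂ) * Complex.I / 12

/-- The phase function `f(t)` of the saddle point analysis of `𝓜`. -/
def fMt (ζ : ℝ) (ω t : ℂ) : ℂ :=
  -(Li2 (-Complex.exp (2*(Real.pi:ℂ)*(ζ:ℂ)))
    + Li2 (-Complex.exp (2*(Real.pi:ℂ)*(t-(ζ:ℂ))))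
    - Li2 (-Complex.exp (2*(Real.pi:ℂ)*(t+Complex.I/2)))) / (2*(Real.pi:ℂ)*Complex.I)
  + Complex.I*(Real.pi:ℂ)*(ζ:ℂ)^2 + 2*Complex.I*(Real.pi:ℂ)*t*ω + (Real.pi:ℂ)*t
  + Complex.I*(Real.pi:ℂ)/6

/-- The amplitude `g(t)` of the saddle point analysis of `𝓜`. -/
def gM (t : ℂ) : ℂ :=
  Complex.exp ((Real.pi:ℂ)*t - Complex.log (1 - Complex.exp (2*(Real.pi:ℂ)*t)) / 2)

/-- The error term `E(τ, t)` from the semiclassical analysis of `𝓜`. -/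
def Efun (ζ τ : ℝ) (t : ℂ) : ℂ :=
  Complex.I * (Li2 (Complex.exp (2*(Real.pi:ℂ)*t))
      - Li2 (Complex.exp (Complex.I*(Real.pi:ℂ)*(τ:ℂ) + 2*(Real.pi:ℂ)*t))) / (2*(Real.pi:ℂ)*(τ:ℂ))
  + Complex.log (1 - Complex.exp (2*(Real.pi:ℂ)*t)) / 2
  + (Complex.I*(Real.pi:ℂ)*(τ:ℂ)/12) *
      (Complex.exp (2*(Real.pi:ℂ)*t + Complex.I*(Real.pi:ℂ)*(τ:ℂ))
          / (Complex.exp (2*(Real.pi:ℂ)*t + Complex.I*(Real.pi:ℂ)*(τ:ℂ)) - 1)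
        - Complex.exp (2*(Real.pi:ℂ)*(ζ:ℂ)) / (Complex.exp (2*(Real.pi:ℂ)*(ζ:ℂ)) + 1)
        - Complex.exp (2*(Real.pi:ℂ)*t)
          / (Complex.exp (2*(Real.pi:ℂ)*(ζ:ℂ)) + Complex.exp (2*(Real.pi:ℂ)*t)) + 2)

/-- The phase function `f(t)` of the saddle point analysis of `𝓠`. -/
def fQt (σ μ : ℝ) (t : ℂ) : ℂ :=
  -(Li2 (-Complex.exp (2*(Real.pi:ℂ)*(μ:ℂ)))
    + Li2 (-Complex.exp (2*(Real.pi:ℂ)*(t-(σ:ℂ))))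
    + Li2 (-Complex.exp (2*(Real.pi:ℂ)*(t+(σ:ℂ))))) / (2*(Real.pi:ℂ)*Complex.I)
  + 2*Complex.I*(Real.pi:ℂ)*(μ:ℂ)*t + (Real.pi:ℂ)*(t-(μ:ℂ)) + 5*Complex.I*(Real.pi:ℂ)/12

/-- The amplitude `g(t)` of the saddle point analysis of `𝓠`. -/
def gQ (μ : ℝ) (t : ℂ) : ℂ := Complex.exp ((Real.pi:ℂ)*(t-(μ:ℂ)))

end


namespace EfunAux

open MeasureTheory Set Metric

noncomputable section


def wf (t : ℂ) (x : ℝ) : ℂ := Complex.exp (2*(Real.pi:ℂ)*t + x*Complex.I)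

lemma wf_cont (t : ℂ) : Continuous (wf t) :=
  Complex.continuous_exp.comp (continuous_const.add (Complex.continuous_ofReal.mul continuous_const))

lemma wf_abs (t : ℂ) (x : ℝ) : ‖wf t x‖ = Real.exp (2*Real.pi*t.re) := by
  rw [wf, Complex.norm_exp]
  congr 1
  simp [Complex.add_re, Complex.mul_re, Complex.mul_im, Complex.I_re, Complex.I_im,
    Complex.ofReal_re, Complex.ofReal_im]

lemma wf_im (t : ℂ) (x : ℝ) :
    (wf t x).im = Real.exp (2*Real.pi*t.re) * Real.sin (2*Real.pi*t.im + x) := by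
  rw [wf, Complex.exp_im]
  have h1 : (2*(Real.pi:ℂ)*t + x*Complex.I).re = 2*Real.pi*t.re := by
    simp [Complex.add_re, Complex.mul_re, Complex.mul_im, Complex.I_re, Complex.I_im,
      Complex.ofReal_re, Complex.ofReal_im]
  have h2 : (2*(Real.pi:ℂ)*t + x*Complex.I).im = 2*Real.pi*t.im + x := by
    simp [Complex.add_im, Complex.mul_re, Complex.mul_im, Complex.I_re, Complex.I_im,
      Complex.ofReal_re, Complex.ofReal_im]
  rw [h1, h2]

lemma wf_hasDerivAt (t : ℂ) (x : ℝ) : HasDerivAt (wf t) (Complex.I * wf t x) x := by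
  have h1 := (((hasDerivAt_id ((x:ℝ):ℂ)).mul_const Complex.I).const_add
      (2*(Real.pi:ℂ)*t)).cexp.comp_ofReal
  show HasDerivAt (fun y : ℝ => Complex.exp (2*(Real.pi:ℂ)*t + (y:ℂ)*Complex.I)) _ x
  rw [wf]
  convert h1 using 1
  simp only [id_eq, id]
  ring_nf
  rfl

lemma sin_lower {a x : ℝ} (ha : 0 < a) (ha' : a ≤ Real.pi/2) (h1 : a ≤ x)
    (h2 : x ≤ Real.pi - a) : Real.sin a ≤ Real.sin x := by
  have hπ := Real.pi_pos
  rcases le_total x (Real.pi/2) with h | h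
  · exact Real.strictMonoOn_sin.monotoneOn ⟨by linarith, ha'⟩ ⟨by linarith, h⟩ h1
  · have hx1 : -(Real.pi/2) ≤ Real.pi - x := by linarith
    have hx2 : Real.pi - x ≤ Real.pi/2 := by linarith
    have ha1 : -(Real.pi/2) ≤ a := by linarith
    calc Real.sin a ≤ Real.sin (Real.pi - x) :=
          Real.strictMonoOn_sin.monotoneOn ⟨ha1, ha'⟩ ⟨hx1, hx2⟩ (by linarith)
      _ = Real.sin x := Real.sin_pi_sub x





variable {δ : ℝ} {t : ℂ} {x s : ℝ}

lemma A_pos (hδ1 : 0 < δ) (hδ2 : δ < 1/8) : 0 < Real.sin (Real.pi*δ) :=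
  Real.sin_pos_of_pos_of_lt_pi (by positivity)
    (by nlinarith [Real.pi_pos])

lemma sin_angle (hδ1 : 0 < δ) (hδ2 : δ < 1/8) (ht1 : -1/2 + δ < t.im) (ht2 : t.im < -(2*δ))
    (hx : x ∈ Icc (-(Real.pi*δ)) (2*(Real.pi*δ))) :
    Real.sin (2*Real.pi*t.im + x) ≤ -Real.sin (Real.pi*δ) := by
  have hπ := Real.pi_pos
  have h1 : Real.pi*δ ≤ -(2*Real.pi*t.im + x) := by nlinarith [hx.2]
  have h2 : -(2*Real.pi*t.im + x) ≤ Real.pi - Real.pi*δ := by nlinarith [hx.1]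
  have h3 := sin_lower (by positivity) (by nlinarith) h1 h2
  rw [Real.sin_neg] at h3
  linarith

lemma wf_im_le (hδ1 : 0 < δ) (hδ2 : δ < 1/8) (ht1 : -1/2 + δ < t.im) (ht2 : t.im < -(2*δ))
    (hx : x ∈ Icc (-(Real.pi*δ)) (2*(Real.pi*δ))) :
    (wf t x).im ≤ -(Real.exp (2*Real.pi*t.re) * Real.sin (Real.pi*δ)) := by
  rw [wf_im]
  have h := sin_angle hδ1 hδ2 ht1 ht2 hx
  nlinarith [Real.exp_pos (2*Real.pi*t.re)]

lemma denom_im (hδ1 : 0 < δ) (hδ2 : δ < 1/8) (ht1 : -1/2 + δ < t.im) (ht2 : t.im < -(2*δ))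
    (hx : x ∈ Icc (-(Real.pi*δ)) (2*(Real.pi*δ))) (hs : s ∈ Icc (0:ℝ) 1) :
    s*(Real.exp (2*Real.pi*t.re) * Real.sin (Real.pi*δ)) ≤ (1 - (s:ℂ)*wf t x).im := by
  have h : (1 - (s:ℂ)*wf t x).im = -(s * (wf t x).im) := by
    simp [Complex.sub_im, Complex.mul_im, Complex.ofReal_re, Complex.ofReal_im]
  rw [h]
  nlinarith [mul_le_mul_of_nonneg_left (wf_im_le hδ1 hδ2 ht1 ht2 hx) hs.1]

lemma denom_abs1 (hδ1 : 0 < δ) (hδ2 : δ < 1/8) (ht1 : -1/2 + δ < t.im) (ht2 : t.im < -(2*δ))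
    (hx : x ∈ Icc (-(Real.pi*δ)) (2*(Real.pi*δ))) (hs : s ∈ Icc (0:ℝ) 1) :
    s*(Real.exp (2*Real.pi*t.re) * Real.sin (Real.pi*δ)) ≤ ‖1 - (s:ℂ)*wf t x‖ :=
  le_trans (denom_im hδ1 hδ2 ht1 ht2 hx hs)
    (le_trans (le_abs_self _) (Complex.abs_im_le_norm _))

lemma denom_abs3 (hδ1 : 0 < δ) (hδ2 : δ < 1/8) (ht1 : -1/2 + δ < t.im) (ht2 : t.im < -(2*δ))
    (hx : x ∈ Icc (-(Real.pi*δ)) (2*(Real.pi*δ))) (hs : s ∈ Icc (0:ℝ) 1) :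
    Real.sin (Real.pi*δ)/2 ≤ ‖1 - (s:ℂ)*wf t x‖ := by
  have hA := A_pos hδ1 hδ2
  have hA1 : Real.sin (Real.pi*δ) ≤ 1 := Real.sin_le_one _
  rcases le_total (s*Real.exp (2*Real.pi*t.re)) (1/2) with h | h
  · have h2 : (1:ℝ) - s*Real.exp (2*Real.pi*t.re) ≤ ‖1 - (s:ℂ)*wf t x‖ := by
      have h3 := norm_sub_norm_le (1:ℂ) ((s:ℂ)*wf t x)
      simpa [norm_mul, Complex.norm_real, Real.norm_eq_abs, abs_of_nonneg hs.1, wf_abs]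
        using h3
    linarith
  · have h2 := denom_abs1 hδ1 hδ2 ht1 ht2 hx hs
    nlinarith

lemma denom_ne (hδ1 : 0 < δ) (hδ2 : δ < 1/8) (ht1 : -1/2 + δ < t.im) (ht2 : t.im < -(2*δ))
    (hx : x ∈ Icc (-(Real.pi*δ)) (2*(Real.pi*δ))) (hs : s ∈ Icc (0:ℝ) 1) :
    1 - (s:ℂ)*wf t x ≠ 0 := by
  intro h
  have h3 := denom_abs3 hδ1 hδ2 ht1 ht2 hx hs
  rw [h] at h3
  simp at h3
  nlinarith [A_pos hδ1 hδ2]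

lemma denom_slit (hδ1 : 0 < δ) (hδ2 : δ < 1/8) (ht1 : -1/2 + δ < t.im) (ht2 : t.im < -(2*δ))
    (hx : x ∈ Icc (-(Real.pi*δ)) (2*(Real.pi*δ))) (hs : s ∈ Icc (0:ℝ) 1) :
    1 - (s:ℂ)*wf t x ∈ Complex.slitPlane := by
  rcases eq_or_lt_of_le hs.1 with h | h
  · rw [Complex.mem_slitPlane_iff]
    left
    rw [← h]
    norm_num
  · rw [Complex.mem_slitPlane_iff]
    right
    have h2 := denom_im hδ1 hδ2 ht1 ht2 hx hs
    have h3 : 0 < s*(Real.exp (2*Real.pi*t.re) * Real.sin (Real.pi*δ)) := by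
      have := A_pos hδ1 hδ2
      have := Real.exp_pos (2*Real.pi*t.re)
      positivity
    exact ne_of_gt (lt_of_lt_of_le h3 h2)

lemma ratio_le (hδ1 : 0 < δ) (hδ2 : δ < 1/8) (ht1 : -1/2 + δ < t.im) (ht2 : t.im < -(2*δ))
    (hx : x ∈ Icc (-(Real.pi*δ)) (2*(Real.pi*δ))) (hs : s ∈ Icc (0:ℝ) 1) :
    ‖wf t x/(1 - (s:ℂ)*wf t x)‖
      ≤ 2*Real.exp (2*Real.pi*t.re)/Real.sin (Real.pi*δ) := by
  have hA := A_pos hδ1 hδ2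
  have hR := Real.exp_pos (2*Real.pi*t.re)
  have h3 := denom_abs3 hδ1 hδ2 ht1 ht2 hx hs
  have hD : 0 < ‖1 - (s:ℂ)*wf t x‖ := by linarith
  rw [norm_div, wf_abs, div_le_div_iff₀ hD hA]
  nlinarith

lemma ratio_le1 (hδ1 : 0 < δ) (hδ2 : δ < 1/8) (ht1 : -1/2 + δ < t.im) (ht2 : t.im < -(2*δ))
    (hx : x ∈ Icc (-(Real.pi*δ)) (2*(Real.pi*δ))) :
    ‖wf t x/(1 - wf t x)‖ ≤ 1/Real.sin (Real.pi*δ) := by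
  have hA := A_pos hδ1 hδ2
  have hR := Real.exp_pos (2*Real.pi*t.re)
  have h1 := denom_abs1 hδ1 hδ2 ht1 ht2 hx (⟨zero_le_one, le_refl 1⟩ : (1:ℝ) ∈ Icc (0:ℝ) 1)
  simp only [Complex.ofReal_one, one_mul] at h1
  have hD : 0 < ‖1 - wf t x‖ := by nlinarith
  rw [norm_div, wf_abs, div_le_div_iff₀ hD hA]
  nlinarith




variable {δ : ℝ} {t : ℂ} {x s : ℝ}

lemma hasDerivAt_log_x (hδ1 : 0 < δ) (hδ2 : δ < 1/8) (ht1 : -1/2 + δ < t.im)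
    (ht2 : t.im < -(2*δ)) (hx : x ∈ Icc (-(Real.pi*δ)) (2*(Real.pi*δ)))
    (hs : s ∈ Icc (0:ℝ) 1) :
    HasDerivAt (fun y : ℝ => Complex.log (1 - (s:ℂ)*wf t y))
      (-((s:ℂ)*(Complex.I*wf t x))/(1 - (s:ℂ)*wf t x)) x := by
  have h1 : HasDerivAt (fun y : ℝ => 1 - (s:ℂ)*wf t y) (-((s:ℂ)*(Complex.I*wf t x))) x :=
    ((wf_hasDerivAt t x).const_mul ((s:ℝ):ℂ)).const_sub 1
  exact h1.clog_real (denom_slit hδ1 hδ2 ht1 ht2 hx hs)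

lemma hasDerivAt_log_s (hδ1 : 0 < δ) (hδ2 : δ < 1/8) (ht1 : -1/2 + δ < t.im)
    (ht2 : t.im < -(2*δ)) (hx : x ∈ Icc (-(Real.pi*δ)) (2*(Real.pi*δ)))
    (hs : s ∈ Icc (0:ℝ) 1) :
    HasDerivAt (fun σ : ℝ => Complex.log (1 - (σ:ℂ)*wf t x))
      (-(wf t x)/(1 - (s:ℂ)*wf t x)) s := by
  have h1 : HasDerivAt (fun σ : ℝ => 1 - (σ:ℂ)*wf t x) (-(wf t x)) s := by
    have h0 := (((hasDerivAt_id ((s:ℝ):ℂ)).mul_const (wf t x)).const_sub 1).comp_ofReal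
    simpa using h0
  exact h1.clog_real (denom_slit hδ1 hδ2 ht1 ht2 hx hs)

lemma contOn_ratio_s (hδ1 : 0 < δ) (hδ2 : δ < 1/8) (ht1 : -1/2 + δ < t.im)
    (ht2 : t.im < -(2*δ)) (hx : x ∈ Icc (-(Real.pi*δ)) (2*(Real.pi*δ))) :
    ContinuousOn (fun σ : ℝ => -(wf t x)/(1 - (σ:ℂ)*wf t x)) (Icc (0:ℝ) 1) := by
  apply ContinuousOn.div continuousOn_const
  · exact (continuous_const.sub (Complex.continuous_ofReal.mul continuous_const)).continuousOn
  · intro σ hσ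
    exact denom_ne hδ1 hδ2 ht1 ht2 hx hσ

lemma log_bound (hδ1 : 0 < δ) (hδ2 : δ < 1/8) (ht1 : -1/2 + δ < t.im)
    (ht2 : t.im < -(2*δ)) (hx : x ∈ Icc (-(Real.pi*δ)) (2*(Real.pi*δ)))
    (hs : s ∈ Icc (0:ℝ) 1) :
    ‖Complex.log (1 - (s:ℂ)*wf t x)‖
      ≤ s * (2*Real.exp (2*Real.pi*t.re)/Real.sin (Real.pi*δ)) := by
  have hsub : Icc (0:ℝ) s ⊆ Icc (0:ℝ) 1 := Icc_subset_Icc le_rfl hs.2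
  have hftc : ∫ σ in (0:ℝ)..s, -(wf t x)/(1 - (σ:ℂ)*wf t x)
      = Complex.log (1 - (s:ℂ)*wf t x) - Complex.log (1 - ((0:ℝ):ℂ)*wf t x) := by
    apply intervalIntegral.integral_eq_sub_of_hasDerivAt
    · intro σ hσ
      rw [uIcc_of_le hs.1] at hσ
      exact hasDerivAt_log_s hδ1 hδ2 ht1 ht2 hx (hsub hσ)
    · apply ContinuousOn.intervalIntegrable
      rw [uIcc_of_le hs.1]
      exact (contOn_ratio_s hδ1 hδ2 ht1 ht2 hx).mono hsub
  have h0 : Complex.log (1 - ((0:ℝ):ℂ)*wf t x) = 0 := by simp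
  rw [h0, sub_zero] at hftc
  rw [← hftc]
  have hb : ∀ σ ∈ Set.uIoc (0:ℝ) s,
      ‖-(wf t x)/(1 - (σ:ℂ)*wf t x)‖ ≤ 2*Real.exp (2*Real.pi*t.re)/Real.sin (Real.pi*δ) := by
    intro σ hσ
    rw [uIoc_of_le hs.1] at hσ
    have hσ' : σ ∈ Icc (0:ℝ) 1 := ⟨le_of_lt hσ.1, le_trans hσ.2 hs.2⟩
    have := ratio_le hδ1 hδ2 ht1 ht2 hx hσ'
    rw [neg_div, norm_neg]
    exact this
  have := intervalIntegral.norm_integral_le_of_norm_le_const hb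
  calc ‖∫ σ in (0:ℝ)..s, -(wf t x)/(1 - (σ:ℂ)*wf t x)‖
      ≤ 2*Real.exp (2*Real.pi*t.re)/Real.sin (Real.pi*δ) * |s - 0| := this
    _ = s * (2*Real.exp (2*Real.pi*t.re)/Real.sin (Real.pi*δ)) := by
        rw [sub_zero, abs_of_nonneg hs.1]; ring





variable {δ : ℝ} {t : ℂ}

lemma integral_inner_ratio (hδ1 : 0 < δ) (hδ2 : δ < 1/8) (ht1 : -1/2 + δ < t.im)
    (ht2 : t.im < -(2*δ)) {u : ℝ} (hu : u ∈ Icc (-(Real.pi*δ)) (2*(Real.pi*δ))) :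
    ∫ σ in (0:ℝ)..1, wf t u/(1 - (σ:ℂ)*wf t u) = -Complex.log (1 - wf t u) := by
  have hftc := intervalIntegral.integral_eq_sub_of_hasDerivAt
    (f := fun σ : ℝ => -Complex.log (1 - (σ:ℂ)*wf t u))
    (f' := fun σ : ℝ => wf t u/(1 - (σ:ℂ)*wf t u)) (a := 0) (b := 1)
    (fun σ hσ => by
      rw [uIcc_of_le zero_le_one] at hσ
      have h := (hasDerivAt_log_s hδ1 hδ2 ht1 ht2 hu hσ).neg
      rw [neg_div, neg_neg] at h
      exact h)
    (by
      apply ContinuousOn.intervalIntegrable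
      rw [uIcc_of_le zero_le_one]
      apply ContinuousOn.div continuousOn_const
      · exact (continuous_const.sub (Complex.continuous_ofReal.mul continuous_const)).continuousOn
      · intro σ hσ
        exact denom_ne hδ1 hδ2 ht1 ht2 hu hσ)
  rw [hftc]
  norm_num

lemma li2_hasDerivAt (hδ1 : 0 < δ) (hδ2 : δ < 1/8) (ht1 : -1/2 + δ < t.im)
    (ht2 : t.im < -(2*δ)) {u : ℝ} (hu1 : 0 ≤ u) (hu2 : u < Real.pi*δ) :
    HasDerivAt (fun y : ℝ => Li2 (wf t y)) (-(Complex.I * Complex.log (1 - wf t u))) u := by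
  have hπ := Real.pi_pos
  have hA := A_pos hδ1 hδ2
  have hεpos : 0 < Real.pi*δ - u := by linarith
  have hball : ∀ y ∈ Metric.ball u (Real.pi*δ - u), y ∈ Icc (-(Real.pi*δ)) (2*(Real.pi*δ)) := by
    intro y hy
    rw [Metric.mem_ball, Real.dist_eq, abs_lt] at hy
    constructor
    · nlinarith [hy.1]
    · nlinarith [hy.2]
  have hu_mem : u ∈ Icc (-(Real.pi*δ)) (2*(Real.pi*δ)) := ⟨by nlinarith, by nlinarith⟩
  have hmeas : ∀ y : ℝ, AEStronglyMeasurable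
      (fun σ : ℝ => Complex.log (1 - (σ:ℂ)*wf t y)/(σ:ℂ))
      (volume.restrict (Set.uIoc (0:ℝ) 1)) := fun y =>
    ((Complex.measurable_log.comp
        (measurable_const.sub (Complex.measurable_ofReal.mul_const (wf t y)))).div
      Complex.measurable_ofReal).aestronglyMeasurable
  have hint : IntervalIntegrable (fun σ : ℝ => Complex.log (1 - (σ:ℂ)*wf t u)/(σ:ℂ))
      volume 0 1 := by
    rw [intervalIntegrable_iff]
    haveI : IsFiniteMeasure (volume.restrict (Set.uIoc (0:ℝ) 1)) := by
      constructor
      rw [Measure.restrict_apply_univ, uIoc_of_le zero_le_one]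
      exact measure_Ioc_lt_top
    apply Integrable.mono'
      (integrable_const (2*Real.exp (2*Real.pi*t.re)/Real.sin (Real.pi*δ))) (hmeas u)
    filter_upwards [ae_restrict_mem measurableSet_uIoc] with σ hσ
    rw [uIoc_of_le zero_le_one] at hσ
    have hσ' : σ ∈ Icc (0:ℝ) 1 := ⟨hσ.1.le, hσ.2⟩
    have hlog := log_bound hδ1 hδ2 ht1 ht2 hu_mem hσ'
    rw [norm_div, Complex.norm_real, Real.norm_eq_abs,
      abs_of_pos hσ.1]
    rw [div_le_iff₀ hσ.1]
    nlinarith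
  have hmeas' : AEStronglyMeasurable
      (fun σ : ℝ => -(Complex.I * (wf t u/(1 - (σ:ℂ)*wf t u))))
      (volume.restrict (Set.uIoc (0:ℝ) 1)) :=
    (((measurable_const.div
        (measurable_const.sub (Complex.measurable_ofReal.mul_const (wf t u)))).const_mul
      Complex.I).neg).aestronglyMeasurable
  have hbound : ∀ᵐ σ ∂volume, σ ∈ Set.uIoc (0:ℝ) 1 → ∀ y ∈ Metric.ball u (Real.pi*δ - u),
      ‖-(Complex.I * (wf t y/(1 - (σ:ℂ)*wf t y)))‖
        ≤ 2*Real.exp (2*Real.pi*t.re)/Real.sin (Real.pi*δ) := by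
    apply Filter.Eventually.of_forall
    intro σ hσ y hy
    rw [uIoc_of_le zero_le_one] at hσ
    rw [norm_neg, norm_mul, Complex.norm_I, one_mul]
    exact ratio_le hδ1 hδ2 ht1 ht2 (hball y hy) ⟨hσ.1.le, hσ.2⟩
  have hdiff : ∀ᵐ σ ∂volume, σ ∈ Set.uIoc (0:ℝ) 1 → ∀ y ∈ Metric.ball u (Real.pi*δ - u),
      HasDerivAt (fun y => Complex.log (1 - (σ:ℂ)*wf t y)/(σ:ℂ))
        (-(Complex.I * (wf t y/(1 - (σ:ℂ)*wf t y)))) y := by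
    apply Filter.Eventually.of_forall
    intro σ hσ y hy
    rw [uIoc_of_le zero_le_one] at hσ
    have hσC : (σ:ℂ) ≠ 0 := Complex.ofReal_ne_zero.mpr (ne_of_gt hσ.1)
    have hden := denom_ne hδ1 hδ2 ht1 ht2 (hball y hy) ⟨hσ.1.le, hσ.2⟩
    have hd := (hasDerivAt_log_x hδ1 hδ2 ht1 ht2 (hball y hy) ⟨hσ.1.le, hσ.2⟩).div_const (σ:ℂ)
    refine hd.congr_deriv ?_
    field_simp
  have key := intervalIntegral.hasDerivAt_integral_of_dominated_loc_of_deriv_le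
    (F := fun y σ => Complex.log (1 - (σ:ℂ)*wf t y)/(σ:ℂ))
    (F' := fun y σ => -(Complex.I * (wf t y/(1 - (σ:ℂ)*wf t y))))
    (bound := fun _ => 2*Real.exp (2*Real.pi*t.re)/Real.sin (Real.pi*δ))
    (a := 0) (b := 1) (x₀ := u) (μ := volume)
    (Metric.ball_mem_nhds u hεpos) (Filter.Eventually.of_forall hmeas) hint hmeas' hbound
    intervalIntegrable_const hdiff
  have hIs : (∫ σ in (0:ℝ)..1, -(Complex.I * (wf t u/(1 - (σ:ℂ)*wf t u))))
      = Complex.I * Complex.log (1 - wf t u) := by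
    rw [intervalIntegral.integral_neg, intervalIntegral.integral_const_mul,
      integral_inner_ratio hδ1 hδ2 ht1 ht2 hu_mem]
    ring
  have hneg := key.2.neg
  rw [hIs] at hneg
  exact hneg






variable {δ : ℝ} {t : ℂ}

lemma one_mem_Icc01 : (1:ℝ) ∈ Icc (0:ℝ) 1 := ⟨zero_le_one, le_refl 1⟩

lemma denom_ne1 (hδ1 : 0 < δ) (hδ2 : δ < 1/8) (ht1 : -1/2 + δ < t.im) (ht2 : t.im < -(2*δ))
    {x : ℝ} (hx : x ∈ Icc (-(Real.pi*δ)) (2*(Real.pi*δ))) : 1 - wf t x ≠ 0 := by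
  have h := denom_ne hδ1 hδ2 ht1 ht2 hx one_mem_Icc01
  rwa [Complex.ofReal_one, one_mul] at h

lemma hdlog1 (hδ1 : 0 < δ) (hδ2 : δ < 1/8) (ht1 : -1/2 + δ < t.im) (ht2 : t.im < -(2*δ))
    {x : ℝ} (hx : x ∈ Icc (-(Real.pi*δ)) (2*(Real.pi*δ))) :
    HasDerivAt (fun y : ℝ => Complex.log (1 - wf t y))
      (-(Complex.I*wf t x)/(1 - wf t x)) x := by
  have h := hasDerivAt_log_x hδ1 hδ2 ht1 ht2 hx one_mem_Icc01
  simpa using h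

lemma contlog (hδ1 : 0 < δ) (hδ2 : δ < 1/8) (ht1 : -1/2 + δ < t.im) (ht2 : t.im < -(2*δ)) :
    ContinuousOn (fun y : ℝ => Complex.log (1 - wf t y))
      (Icc (-(Real.pi*δ)) (2*(Real.pi*δ))) := by
  intro y hy
  apply ContinuousAt.continuousWithinAt
  apply ContinuousAt.clog
  · exact (continuous_const.sub (wf_cont t)).continuousAt
  · have h := denom_slit hδ1 hδ2 ht1 ht2 hy one_mem_Icc01
    rwa [Complex.ofReal_one, one_mul] at h

lemma norm_combo {a b c : ℂ} {x : ℝ} (ha : ‖a‖ ≤ x) (hb : ‖b‖ ≤ 1) (hc : ‖c‖ ≤ x) :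
    ‖a - b - c + 2‖ ≤ 3 + 2*x := by
  have h2 : ‖(2:ℂ)‖ = 2 := by norm_num
  have s1 : ‖a - b - c + 2‖ ≤ ‖a - b - c‖ + ‖(2:ℂ)‖ := norm_add_le _ _
  have s2 : ‖a - b - c‖ ≤ ‖a - b‖ + ‖c‖ := norm_sub_le _ _
  have s3 : ‖a - b‖ ≤ ‖a‖ + ‖b‖ := norm_sub_le _ _
  rw [h2] at s1
  linarith

lemma Efun_le (ζ : ℝ) (hδ1 : 0 < δ) (hδ2 : δ < 1/8) (ht1 : -1/2 + δ < t.im)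
    (ht2 : t.im < -(2*δ)) {τ : ℝ} (hτ0 : 0 < τ) (hτδ : τ < δ) :
    ‖Efun ζ τ t‖ ≤ (Real.pi/(2*Real.sin (Real.pi*δ))
      + Real.pi*(3 + 2/Real.sin (Real.pi*δ))/12) * τ := by
  have hπ := Real.pi_pos
  have hA := A_pos hδ1 hδ2
  have hR : 0 < Real.exp (2*Real.pi*t.re) := Real.exp_pos _
  have hU0 : 0 < Real.pi*τ := by positivity
  have hUδ : Real.pi*τ < Real.pi*δ := by nlinarith
  have hsub : Icc (0:ℝ) (Real.pi*τ) ⊆ Icc (-(Real.pi*δ)) (2*(Real.pi*δ)) := by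
    intro v hv
    constructor
    · nlinarith [hv.1]
    · nlinarith [hv.2]
  -- pointwise bound on the log-difference
  have hlogdiff : ∀ u ∈ Icc (0:ℝ) (Real.pi*τ),
      ‖Complex.log (1 - wf t 0) - Complex.log (1 - wf t u)‖
        ≤ Real.pi*τ/Real.sin (Real.pi*δ) := by
    intro u hu
    have hsubu : Icc (0:ℝ) u ⊆ Icc (0:ℝ) (Real.pi*τ) := Icc_subset_Icc le_rfl hu.2
    have hftc : ∫ v in (0:ℝ)..u, -(Complex.I*wf t v)/(1 - wf t v)
        = Complex.log (1 - wf t u) - Complex.log (1 - wf t 0) := by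
      apply intervalIntegral.integral_eq_sub_of_hasDerivAt
      · intro v hv
        rw [uIcc_of_le hu.1] at hv
        exact hdlog1 hδ1 hδ2 ht1 ht2 (hsub (hsubu hv))
      · apply ContinuousOn.intervalIntegrable
        rw [uIcc_of_le hu.1]
        apply ContinuousOn.div
        · exact ((continuous_const.mul (wf_cont t)).neg).continuousOn
        · exact (continuous_const.sub (wf_cont t)).continuousOn
        · intro v hv
          exact denom_ne1 hδ1 hδ2 ht1 ht2 (hsub (hsubu hv))
    have hb : ∀ v ∈ Set.uIoc (0:ℝ) u, ‖-(Complex.I*wf t v)/(1 - wf t v)‖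
        ≤ 1/Real.sin (Real.pi*δ) := by
      intro v hv
      rw [uIoc_of_le hu.1] at hv
      have hv' : v ∈ Icc (0:ℝ) (Real.pi*τ) := ⟨hv.1.le, le_trans hv.2 hu.2⟩
      have h := ratio_le1 hδ1 hδ2 ht1 ht2 (hsub hv')
      rw [neg_div, norm_neg]
      calc ‖Complex.I*wf t v/(1 - wf t v)‖
          = ‖wf t v/(1 - wf t v)‖ := by
            rw [mul_div_assoc, norm_mul, Complex.norm_I, one_mul]
        _ ≤ 1/Real.sin (Real.pi*δ) := h
    have hnorm := intervalIntegral.norm_integral_le_of_norm_le_const hb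
    rw [hftc] at hnorm
    rw [norm_sub_rev]
    calc ‖Complex.log (1 - wf t u) - Complex.log (1 - wf t 0)‖
        ≤ 1/Real.sin (Real.pi*δ) * |u - 0| := hnorm
      _ ≤ Real.pi*τ/Real.sin (Real.pi*δ) := by
          rw [sub_zero, abs_of_nonneg hu.1, div_mul_eq_mul_div, one_mul]
          gcongr
          exact hu.2
  -- FTC for Li2 along the segment
  have hcontlogU : ContinuousOn (fun u : ℝ => Complex.log (1 - wf t u))
      (Icc (0:ℝ) (Real.pi*τ)) := (contlog hδ1 hδ2 ht1 ht2).mono hsub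
  have int3 : IntervalIntegrable (fun u : ℝ => Complex.log (1 - wf t u))
      volume 0 (Real.pi*τ) := by
    apply ContinuousOn.intervalIntegrable
    rwa [uIcc_of_le hU0.le]
  have hFTC2 : ∫ u in (0:ℝ)..(Real.pi*τ), -(Complex.I * Complex.log (1 - wf t u))
      = Li2 (wf t (Real.pi*τ)) - Li2 (wf t 0) := by
    refine intervalIntegral.integral_eq_sub_of_hasDerivAt
      (f := fun y : ℝ => Li2 (wf t y))
      (f' := fun u : ℝ => -(Complex.I * Complex.log (1 - wf t u))) (fun u hu => ?_) ?_
    · rw [uIcc_of_le hU0.le] at hu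
      exact li2_hasDerivAt hδ1 hδ2 ht1 ht2 hu.1 (lt_of_le_of_lt hu.2 hUδ)
    · apply ContinuousOn.intervalIntegrable
      rw [uIcc_of_le hU0.le]
      exact (continuousOn_const.mul hcontlogU).neg
  rw [intervalIntegral.integral_neg, intervalIntegral.integral_const_mul] at hFTC2
  set L := ∫ u in (0:ℝ)..(Real.pi*τ), Complex.log (1 - wf t u) with hLdef
  have hLi : Li2 (wf t 0) - Li2 (wf t (Real.pi*τ)) = Complex.I * L := by
    linear_combination hFTC2
  set J := ∫ u in (0:ℝ)..(Real.pi*τ),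
      (Complex.log (1 - wf t 0) - Complex.log (1 - wf t u)) with hJdef
  have hJ : J = ((Real.pi*τ : ℝ):ℂ)*Complex.log (1 - wf t 0) - L := by
    rw [hJdef, intervalIntegral.integral_sub intervalIntegrable_const int3,
      intervalIntegral.integral_const, ← hLdef, sub_zero, Complex.real_smul]
  have hnormJ : ‖J‖ ≤ Real.pi*τ/Real.sin (Real.pi*δ) * (Real.pi*τ) := by
    have h := intervalIntegral.norm_integral_le_of_norm_le_const
      (C := Real.pi*τ/Real.sin (Real.pi*δ))
      (f := fun u : ℝ => Complex.log (1 - wf t 0) - Complex.log (1 - wf t u))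
      (a := 0) (b := Real.pi*τ) (fun u hu => by
        rw [uIoc_of_le hU0.le] at hu
        exact hlogdiff u ⟨hu.1.le, hu.2⟩)
    rw [← hJdef] at h
    calc ‖J‖ ≤ Real.pi*τ/Real.sin (Real.pi*δ) * |Real.pi*τ - 0| := h
      _ = Real.pi*τ/Real.sin (Real.pi*δ) * (Real.pi*τ) := by
          rw [sub_zero, abs_of_nonneg hU0.le]
  -- rewrite Efun
  have he0 : Complex.exp (2*(Real.pi:ℂ)*t) = wf t 0 := by
    rw [wf]
    norm_num
  have heU : Complex.exp (Complex.I*(Real.pi:ℂ)*(τ:ℂ) + 2*(Real.pi:ℂ)*t)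
      = wf t (Real.pi*τ) := by
    rw [wf]
    congr 1
    push_cast
    ring
  have heU2 : Complex.exp (2*(Real.pi:ℂ)*t + Complex.I*(Real.pi:ℂ)*(τ:ℂ))
      = wf t (Real.pi*τ) := by
    rw [wf]
    congr 1
    push_cast
    ring
  have hτC : (τ:ℂ) ≠ 0 := Complex.ofReal_ne_zero.mpr (ne_of_gt hτ0)
  have hπC : (Real.pi:ℂ) ≠ 0 := Complex.ofReal_ne_zero.mpr Real.pi_ne_zero
  have hII : Complex.I * (Complex.I * L) = -L := by
    rw [← mul_assoc, Complex.I_mul_I, neg_one_mul]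
  have hhalf : (2*(Real.pi:ℂ)*(τ:ℂ))⁻¹ * (((Real.pi*τ:ℝ):ℂ)*Complex.log (1 - wf t 0) - L)
      = Complex.I * (Complex.I * L) / (2*(Real.pi:ℂ)*(τ:ℂ)) + Complex.log (1 - wf t 0)/2 := by
    rw [hII]
    push_cast
    field_simp
    ring
  have hE : Efun ζ τ t = (2*(Real.pi:ℂ)*(τ:ℂ))⁻¹ * J
      + (Complex.I*(Real.pi:ℂ)*(τ:ℂ)/12) *
        (wf t (Real.pi*τ)/(wf t (Real.pi*τ) - 1)
          - Complex.exp (2*(Real.pi:ℂ)*(ζ:ℂ))/(Complex.exp (2*(Real.pi:ℂ)*(ζ:ℂ)) + 1)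
          - wf t 0/(Complex.exp (2*(Real.pi:ℂ)*(ζ:ℂ)) + wf t 0) + 2) := by
    rw [Efun, he0, heU, heU2, hLi, hJ, hhalf, hII]
  -- bound the two pieces
  have hnorm1 : ‖(2*(Real.pi:ℂ)*(τ:ℂ))⁻¹ * J‖
      ≤ Real.pi/(2*Real.sin (Real.pi*δ)) * τ := by
    rw [norm_mul, norm_inv]
    have h2 : (2*(Real.pi:ℂ)*(τ:ℂ)) = ((2*Real.pi*τ : ℝ):ℂ) := by push_cast; ring
    rw [h2, Complex.norm_real, Real.norm_eq_abs, abs_of_pos (by positivity)]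
    calc (2*Real.pi*τ)⁻¹ * ‖J‖
        ≤ (2*Real.pi*τ)⁻¹ * (Real.pi*τ/Real.sin (Real.pi*δ) * (Real.pi*τ)) := by gcongr
      _ = Real.pi/(2*Real.sin (Real.pi*δ)) * τ := by
          field_simp
  have hx0 : (0:ℝ) ∈ Icc (-(Real.pi*δ)) (2*(Real.pi*δ)) := ⟨by nlinarith, by nlinarith⟩
  have hxU : Real.pi*τ ∈ Icc (-(Real.pi*δ)) (2*(Real.pi*δ)) := hsub ⟨hU0.le, le_refl _⟩
  have hBr1 : ‖wf t (Real.pi*τ)/(wf t (Real.pi*τ) - 1)‖ ≤ 1/Real.sin (Real.pi*δ) := by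
    have h : wf t (Real.pi*τ) - 1 = -(1 - wf t (Real.pi*τ)) := by ring
    rw [h, div_neg, norm_neg]
    exact ratio_le1 hδ1 hδ2 ht1 ht2 hxU
  have he : 0 < Real.exp (2*Real.pi*ζ) := Real.exp_pos _
  have hz : Complex.exp (2*(Real.pi:ℂ)*(ζ:ℂ)) = ((Real.exp (2*Real.pi*ζ) : ℝ):ℂ) := by
    rw [Complex.ofReal_exp]
    congr 1
    push_cast
    ring
  have hBr2 : ‖Complex.exp (2*(Real.pi:ℂ)*(ζ:ℂ))/(Complex.exp (2*(Real.pi:ℂ)*(ζ:ℂ)) + 1)‖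
      ≤ 1 := by
    have h : Complex.exp (2*(Real.pi:ℂ)*(ζ:ℂ))/(Complex.exp (2*(Real.pi:ℂ)*(ζ:ℂ)) + 1)
        = ((Real.exp (2*Real.pi*ζ)/(Real.exp (2*Real.pi*ζ)+1) : ℝ):ℂ) := by
      rw [hz]
      push_cast
      ring
    rw [h, Complex.norm_real, Real.norm_eq_abs, abs_of_pos (by positivity),
      div_le_one (by positivity)]
    linarith
  have hBr3 : ‖wf t 0/(Complex.exp (2*(Real.pi:ℂ)*(ζ:ℂ)) + wf t 0)‖
      ≤ 1/Real.sin (Real.pi*δ) := by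
    have him := wf_im_le hδ1 hδ2 ht1 ht2 hx0
    have himabs : Real.exp (2*Real.pi*t.re)*Real.sin (Real.pi*δ) ≤ |(wf t 0).im| := by
      rw [abs_of_nonpos (by nlinarith)]
      linarith
    have hd : Real.exp (2*Real.pi*t.re)*Real.sin (Real.pi*δ)
        ≤ ‖Complex.exp (2*(Real.pi:ℂ)*(ζ:ℂ)) + wf t 0‖ := by
      have h1 : (Complex.exp (2*(Real.pi:ℂ)*(ζ:ℂ)) + wf t 0).im = (wf t 0).im := by
        rw [hz, Complex.add_im, Complex.ofReal_im, zero_add]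
      calc Real.exp (2*Real.pi*t.re)*Real.sin (Real.pi*δ)
          ≤ |(Complex.exp (2*(Real.pi:ℂ)*(ζ:ℂ)) + wf t 0).im| := by rw [h1]; exact himabs
        _ ≤ ‖_‖ := Complex.abs_im_le_norm _
    have hdpos : 0 < ‖Complex.exp (2*(Real.pi:ℂ)*(ζ:ℂ)) + wf t 0‖ :=
      lt_of_lt_of_le (by positivity) hd
    rw [norm_div, wf_abs, div_le_div_iff₀ hdpos hA]
    linarith [hd]
  have hBr := norm_combo hBr1 hBr2 hBr3
  have hnorm2 : ‖(Complex.I*(Real.pi:ℂ)*(τ:ℂ)/12) *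
        (wf t (Real.pi*τ)/(wf t (Real.pi*τ) - 1)
          - Complex.exp (2*(Real.pi:ℂ)*(ζ:ℂ))/(Complex.exp (2*(Real.pi:ℂ)*(ζ:ℂ)) + 1)
          - wf t 0/(Complex.exp (2*(Real.pi:ℂ)*(ζ:ℂ)) + wf t 0) + 2)‖
      ≤ Real.pi*τ/12 * (3 + 2/Real.sin (Real.pi*δ)) := by
    rw [norm_mul]
    have h1 : ‖Complex.I*(Real.pi:ℂ)*(τ:ℂ)/12‖ = Real.pi*τ/12 := by
      rw [norm_div, norm_mul, norm_mul, Complex.norm_I, one_mul,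
        Complex.norm_real, Real.norm_eq_abs, Complex.norm_real, Real.norm_eq_abs,
        abs_of_pos hπ, abs_of_pos hτ0]
      norm_num
    rw [h1]
    have h3 : 3 + 2*(1/Real.sin (Real.pi*δ)) = 3 + 2/Real.sin (Real.pi*δ) := by ring
    rw [h3] at hBr
    gcongr
  calc ‖Efun ζ τ t‖ ≤ ‖(2*(Real.pi:ℂ)*(τ:ℂ))⁻¹ * J‖ + ‖(Complex.I*(Real.pi:ℂ)*(τ:ℂ)/12) *
        (wf t (Real.pi*τ)/(wf t (Real.pi*τ) - 1)
          - Complex.exp (2*(Real.pi:ℂ)*(ζ:ℂ))/(Complex.exp (2*(Real.pi:ℂ)*(ζ:ℂ)) + 1)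
          - wf t 0/(Complex.exp (2*(Real.pi:ℂ)*(ζ:ℂ)) + wf t 0) + 2)‖ := by
        rw [hE]
        exact norm_add_le _ _
    _ ≤ Real.pi/(2*Real.sin (Real.pi*δ)) * τ
        + Real.pi*τ/12 * (3 + 2/Real.sin (Real.pi*δ)) := add_le_add hnorm1 hnorm2
    _ = (Real.pi/(2*Real.sin (Real.pi*δ)) + Real.pi*(3 + 2/Real.sin (Real.pi*δ))/12) * τ := by
        ring
end

end EfunAux

/-- the error term `E(b², t)` is `O(b²)` uniformly in the strip. -/
theorem Efun_bound (ζ δ : ℝ) (hδ : δ ∈ Set.Ioo (0:ℝ) (1/8)) :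
    ∃ C > (0:ℝ), ∃ b₀ ∈ Set.Ioo (0:ℝ) 1, ∀ b ∈ Set.Ioo (0:ℝ) b₀, ∀ t : ℂ,
      t.im ∈ Set.Ioo (-1/2 + δ) (-(2*δ)) → ‖Efun ζ (b^2) t‖ ≤ C * b^2 := by
  obtain ⟨hδ1, hδ2⟩ := hδ
  have hA := EfunAux.A_pos hδ1 hδ2
  have hπ := Real.pi_pos
  refine ⟨Real.pi/(2*Real.sin (Real.pi*δ)) + Real.pi*(3 + 2/Real.sin (Real.pi*δ))/12, ?_,
    δ, ⟨hδ1, by linarith⟩, ?_⟩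
  · have h1 : 0 < Real.pi/(2*Real.sin (Real.pi*δ)) := div_pos hπ (by linarith)
    have h2 : 0 < 2/Real.sin (Real.pi*δ) := div_pos two_pos hA
    have h3 : 0 < Real.pi*(3 + 2/Real.sin (Real.pi*δ))/12 :=
      div_pos (mul_pos hπ (by linarith)) (by norm_num)
    linarith
  · intro b hb t ht
    have hb2 : 0 < b^2 := pow_pos hb.1 2
    have hbδ : b^2 < δ := by nlinarith [hb.1, hb.2, hδ1, hδ2]
    exact EfunAux.Efun_le ζ hδ1 hδ2 ht.1 ht.2 hb2 hbδ
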